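/- Let |v⟩ = c|0⟩ + s|1⟩ and |v^⊥⟩ = s̄|0⟩ − c̄|1⟩ with |c|² + |s|² = 1 and s ≠ 0, and let ψ = |1⟩⊗|v^⊥⟩. Define the n-qubit states g₀ = |v⟩^{⊗n} and, for 1 ≤ i ≤ n, g_i = |0⟩^{⊗(i−1)} ⊗ |v^⊥⟩ ⊗ |v⟩^{⊗(n−i)}. Then g₀, g₁, …, g_n form an orthonormal basis of the kernel of H_n(ψ); in particular this kernel has dimension n+1 and the smallest eigenvalue of H_n(ψ) is zero. -/

import Mathlib

open scoped BigOperators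
open Matrix Polynomial

noncomputable section

def twoSite (n : ℕ) (A : Matrix (Fin 2 × Fin 2) (Fin 2 × Fin 2) ℂ) (i j : Fin n) :
    Matrix (Fin n → Fin 2) (Fin n → Fin 2) ℂ :=
  fun x y => A (x i, x j) (y i, y j) *
    ∏ k : Fin n, if k = i ∨ k = j then 1 else (if x k = y k then 1 else 0)

def vecProj (ψ : Fin 2 × Fin 2 → ℂ) : Matrix (Fin 2 × Fin 2) (Fin 2 × Fin 2) ℂ :=
  fun a b => ψ a * star (ψ b)

def HnGen (n : ℕ) (ψs : ℕ → Fin 2 × Fin 2 → ℂ) :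
    Matrix (Fin n → Fin 2) (Fin n → Fin 2) ℂ :=
  ∑ i : Fin n,
    if h : (i : ℕ) + 1 < n then twoSite n (vecProj (ψs (i : ℕ))) i ⟨(i : ℕ) + 1, h⟩ else 0

def Hn (n : ℕ) (ψ : Fin 2 × Fin 2 → ℂ) : Matrix (Fin n → Fin 2) (Fin n → Fin 2) ℂ :=
  HnGen n fun _ => ψ

def psiProd (c s : ℂ) : Fin 2 × Fin 2 → ℂ :=
  fun p => (![0, 1] : Fin 2 → ℂ) p.1 * (![star s, -star c] : Fin 2 → ℂ) p.2

def gvec (c s : ℂ) (n : ℕ) (i : ℕ) : (Fin n → Fin 2) → ℂ :=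
  fun x => ∏ k : Fin n,
    if (k : ℕ) + 1 < i then (![1, 0] : Fin 2 → ℂ) (x k)
    else if (k : ℕ) + 1 = i then (![star s, -star c] : Fin 2 → ℂ) (x k)
    else (![c, s] : Fin 2 → ℂ) (x k)

namespace GSPC

def upd2 {n : ℕ} (x : Fin n → Fin 2) (i j : Fin n) (a b : Fin 2) : Fin n → Fin 2 :=
  Function.update (Function.update x i a) j b

lemma upd2_apply_i {n : ℕ} (x : Fin n → Fin 2) {i j : Fin n} (hij : i ≠ j) (a b : Fin 2) :
    upd2 x i j a b i = a := by
  simp [upd2, Function.update_of_ne hij]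

lemma upd2_apply_j {n : ℕ} (x : Fin n → Fin 2) (i j : Fin n) (a b : Fin 2) :
    upd2 x i j a b j = b := by
  simp [upd2]

lemma upd2_apply_other {n : ℕ} (x : Fin n → Fin 2) {i j k : Fin n} (hki : k ≠ i) (hkj : k ≠ j)
    (a b : Fin 2) : upd2 x i j a b k = x k := by
  simp [upd2, Function.update_of_ne hki, Function.update_of_ne hkj]

def Kc (c s : ℂ) {n : ℕ} (f : (Fin n → Fin 2) → ℂ) (i j : Fin n) (x : Fin n → Fin 2) : ℂ :=
  s * f (upd2 x i j 1 0) - c * f (upd2 x i j 1 1)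

lemma psi_conj_sum (c s : ℂ) {n : ℕ} (f : (Fin n → Fin 2) → ℂ) (i j : Fin n)
    (x : Fin n → Fin 2) :
    (∑ a : Fin 2, ∑ b : Fin 2, star (psiProd c s (a, b)) * f (upd2 x i j a b))
      = Kc c s f i j x := by
  simp [psiProd, Fin.sum_univ_two, Kc]
  ring

lemma prod_delta_eq {n : ℕ} (x y : Fin n → Fin 2) (i j : Fin n) :
    (∏ k : Fin n, if k = i ∨ k = j then (1:ℂ) else (if x k = y k then 1 else 0)) =
      if upd2 x i j (y i) (y j) = y then 1 else 0 := by
  by_cases h : upd2 x i j (y i) (y j) = y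
  · rw [if_pos h]
    apply Finset.prod_eq_one
    intro k _
    by_cases hk : k = i ∨ k = j
    · rw [if_pos hk]
    · rw [if_neg hk]
      push_neg at hk
      have := congrFun h k
      rw [upd2_apply_other x hk.1 hk.2] at this
      rw [if_pos this]
  · rw [if_neg h]
    have : ∃ k, ¬(k = i ∨ k = j) ∧ x k ≠ y k := by
      by_contra hc
      push_neg at hc
      apply h
      funext k
      by_cases hki : k = j
      · subst hki; exact upd2_apply_j x i k (y i) (y k)
      · by_cases hkj : k = i
        · subst hkj
          by_cases hij : k = j
          · subst hij; exact upd2_apply_j x k k (y k) (y k)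
          · rw [upd2_apply_i x hij]
        · rw [upd2_apply_other x hkj hki]
          exact hc k (by tauto)
    obtain ⟨k, hk1, hk2⟩ := this
    apply Finset.prod_eq_zero (Finset.mem_univ k)
    rw [if_neg hk1, if_neg hk2]

lemma twoSite_mulVec {n : ℕ} (A : Matrix (Fin 2 × Fin 2) (Fin 2 × Fin 2) ℂ)
    {i j : Fin n} (hij : i ≠ j) (f : (Fin n → Fin 2) → ℂ) (x : Fin n → Fin 2) :
    (twoSite n A i j).mulVec f x
      = ∑ a : Fin 2, ∑ b : Fin 2, A (x i, x j) (a, b) * f (upd2 x i j a b) := by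
  unfold Matrix.mulVec dotProduct twoSite
  simp only [prod_delta_eq x _ i j]
  rw [← Finset.sum_fiberwise_of_maps_to (t := (Finset.univ : Finset (Fin 2 × Fin 2)))
    (g := fun y => (y i, y j)) (fun y _ => Finset.mem_univ _)]
  rw [Fintype.sum_prod_type]
  refine Finset.sum_congr rfl fun a _ => Finset.sum_congr rfl fun b _ => ?_
  have key : ∀ y ∈ Finset.univ.filter (fun y : Fin n → Fin 2 => (y i, y j) = (a, b)),
      (A (x i, x j) (y i, y j) * (if upd2 x i j (y i) (y j) = y then (1:ℂ) else 0)) * f y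
        = if y = upd2 x i j a b then A (x i, x j) (a, b) * f y else 0 := by
    intro y hy
    simp only [Finset.mem_filter, Prod.mk.injEq] at hy
    obtain ⟨-, hyi, hyj⟩ := hy
    rw [hyi, hyj]
    by_cases hcase : upd2 x i j a b = y
    · rw [if_pos hcase, if_pos hcase.symm]; ring
    · rw [if_neg hcase, if_neg (Ne.symm hcase)]; ring
  rw [Finset.sum_congr rfl key, Finset.sum_ite_eq' ]
  have hmem : upd2 x i j a b ∈ Finset.univ.filter (fun y : Fin n → Fin 2 => (y i, y j) = (a, b)) := by
    simp [upd2_apply_i x hij, upd2_apply_j]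
  rw [if_pos hmem]


lemma upd2_upd2 {n : ℕ} (x : Fin n → Fin 2) {i j : Fin n} (hij : i ≠ j) (a b a' b' : Fin 2) :
    upd2 (upd2 x i j a b) i j a' b' = upd2 x i j a' b' := by
  funext k
  by_cases hki : k = i
  · subst hki; rw [upd2_apply_i _ hij, upd2_apply_i _ hij]
  · by_cases hkj : k = j
    · subst hkj; rw [upd2_apply_j, upd2_apply_j]
    · rw [upd2_apply_other _ hki hkj, upd2_apply_other _ hki hkj, upd2_apply_other _ hki hkj]

lemma upd2_eq_self {n : ℕ} {x : Fin n → Fin 2} {i j : Fin n} {a b : Fin 2}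
    (h1 : x i = a) (h2 : x j = b) : upd2 x i j a b = x := by
  funext k
  by_cases hki : k = i
  · subst hki
    by_cases hkj : k = j
    · subst hkj; rw [upd2_apply_j, h2]
    · rw [upd2_apply_i _ hkj, h1]
  · by_cases hkj : k = j
    · subst hkj; rw [upd2_apply_j, h2]
    · rw [upd2_apply_other _ hki hkj]

lemma fin_succ_ne {n : ℕ} (i : Fin n) (h : (i:ℕ)+1 < n) : i ≠ (⟨(i:ℕ)+1, h⟩ : Fin n) := by
  intro hc
  have := congrArg Fin.val hc
  simp at this

lemma Hn_mulVec (c s : ℂ) {n : ℕ} (f : (Fin n → Fin 2) → ℂ) (x : Fin n → Fin 2) :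
    (Hn n (psiProd c s)).mulVec f x
      = ∑ i : Fin n, if h : (i:ℕ)+1 < n then
          psiProd c s (x i, x ⟨(i:ℕ)+1, h⟩) * Kc c s f i ⟨(i:ℕ)+1, h⟩ x else 0 := by
  have expand : (Hn n (psiProd c s)).mulVec f x
      = ∑ i : Fin n, (if h : (i:ℕ)+1 < n then
          (twoSite n (vecProj (psiProd c s)) i ⟨(i:ℕ)+1, h⟩) else 0).mulVec f x := by
    unfold Hn HnGen Matrix.mulVec dotProduct
    simp only [Matrix.sum_apply, Finset.sum_mul]
    rw [Finset.sum_comm]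
  rw [expand]
  refine Finset.sum_congr rfl fun i _ => ?_
  by_cases h : (i:ℕ)+1 < n
  · rw [dif_pos h, dif_pos h,
      twoSite_mulVec _ (fin_succ_ne i h) f x]
    rw [← psi_conj_sum c s f i ⟨(i:ℕ)+1, h⟩ x, Finset.mul_sum]
    refine Finset.sum_congr rfl fun a _ => ?_
    rw [Finset.mul_sum]
    refine Finset.sum_congr rfl fun b _ => ?_
    unfold vecProj
    ring
  · rw [dif_neg h, dif_neg h]
    simp [Matrix.mulVec, dotProduct]

lemma Kc_upd2 (c s : ℂ) {n : ℕ} (f : (Fin n → Fin 2) → ℂ) {i j : Fin n} (hij : i ≠ j)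
    (x : Fin n → Fin 2) (a b : Fin 2) :
    Kc c s f i j (upd2 x i j a b) = Kc c s f i j x := by
  unfold Kc
  rw [upd2_upd2 _ hij, upd2_upd2 _ hij]

lemma inner_y (c s : ℂ) {n : ℕ} (f : (Fin n → Fin 2) → ℂ) (i j : Fin n)
    (y : Fin n → Fin 2) :
    (∑ a : Fin 2, ∑ b : Fin 2, star (f (upd2 y i j a b)) * (psiProd c s (a, b) * Kc c s f i j y))
      = (Complex.normSq (Kc c s f i j y) : ℂ) := by
  have e1 : ∀ a b : Fin 2, star (f (upd2 y i j a b)) * (psiProd c s (a, b) * Kc c s f i j y)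
      = star (star (psiProd c s (a, b)) * f (upd2 y i j a b)) * Kc c s f i j y := by
    intro a b
    simp only [star_mul', star_star]
    ring
  rw [Finset.sum_congr rfl fun a _ => Finset.sum_congr rfl fun b _ => e1 a b]
  rw [Finset.sum_congr rfl fun a _ => (Finset.sum_mul _ _ _).symm, ← Finset.sum_mul]
  rw [show (∑ a : Fin 2, ∑ b : Fin 2, star (star (psiProd c s (a, b)) * f (upd2 y i j a b)))
      = star (∑ a : Fin 2, ∑ b : Fin 2, star (psiProd c s (a, b)) * f (upd2 y i j a b)) by
    simp [star_sum]]
  rw [psi_conj_sum]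
  simp only [Complex.star_def]
  rw [mul_comm, Complex.mul_conj]

lemma sum_conj_mul (c s : ℂ) {n : ℕ} (f : (Fin n → Fin 2) → ℂ) {i j : Fin n} (hij : i ≠ j) :
    ∑ x : Fin n → Fin 2, star (f x) * (psiProd c s (x i, x j) * Kc c s f i j x)
      = ∑ x ∈ Finset.univ.filter (fun x : Fin n → Fin 2 => x i = 1 ∧ x j = 1),
          (Complex.normSq (Kc c s f i j x) : ℂ) := by
  rw [← Finset.sum_fiberwise_of_maps_to (t := (Finset.univ : Finset (Fin 2 × Fin 2)))
    (g := fun x : Fin n → Fin 2 => (x i, x j)) (fun y _ => Finset.mem_univ _)]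
  rw [Fintype.sum_prod_type]
  have step1 : ∀ a b : Fin 2,
      ∑ x ∈ Finset.univ.filter (fun x : Fin n → Fin 2 => (x i, x j) = (a, b)),
        star (f x) * (psiProd c s (x i, x j) * Kc c s f i j x)
      = ∑ y ∈ Finset.univ.filter (fun y : Fin n → Fin 2 => y i = 1 ∧ y j = 1),
          star (f (upd2 y i j a b)) * (psiProd c s (a, b) * Kc c s f i j y) := by
    intro a b
    refine Finset.sum_nbij' (fun x => upd2 x i j 1 1) (fun y => upd2 y i j a b)
      ?_ ?_ ?_ ?_ ?_
    · intro x hx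
      simp only [Finset.mem_filter, Finset.mem_univ, true_and] at hx ⊢
      exact ⟨upd2_apply_i x hij 1 1, upd2_apply_j x i j 1 1⟩
    · intro y hy
      simp only [Finset.mem_filter, Finset.mem_univ, true_and, Prod.mk.injEq] at hy ⊢
      exact ⟨upd2_apply_i y hij a b, upd2_apply_j y i j a b⟩
    · intro x hx
      simp only [Finset.mem_filter, Finset.mem_univ, true_and, Prod.mk.injEq] at hx
      show upd2 (upd2 x i j 1 1) i j a b = x
      rw [upd2_upd2 _ hij, upd2_eq_self hx.1 hx.2]
    · intro y hy
      simp only [Finset.mem_filter, Finset.mem_univ, true_and] at hy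
      show upd2 (upd2 y i j a b) i j 1 1 = y
      rw [upd2_upd2 _ hij, upd2_eq_self hy.1 hy.2]
    · intro x hx
      simp only [Finset.mem_filter, Finset.mem_univ, true_and, Prod.mk.injEq] at hx
      show star (f x) * (psiProd c s (x i, x j) * Kc c s f i j x)
          = star (f (upd2 (upd2 x i j 1 1) i j a b))
              * (psiProd c s (a, b) * Kc c s f i j (upd2 x i j 1 1))
      rw [upd2_upd2 _ hij, upd2_eq_self hx.1 hx.2, Kc_upd2 c s f hij, hx.1, hx.2]
  rw [Finset.sum_congr rfl (fun a _ => Finset.sum_congr rfl (fun b _ => step1 a b))]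
  rw [Finset.sum_congr rfl (fun a _ => Finset.sum_comm), Finset.sum_comm]
  exact Finset.sum_congr rfl fun y _ => inner_y c s f i j y


lemma quad_form (c s : ℂ) {n : ℕ} (f : (Fin n → Fin 2) → ℂ) :
    ∑ x : Fin n → Fin 2, star (f x) * (Hn n (psiProd c s)).mulVec f x
      = ((∑ i : Fin n, if h : (i:ℕ)+1 < n then
          ∑ x ∈ Finset.univ.filter (fun x : Fin n → Fin 2 => x i = 1 ∧ x ⟨(i:ℕ)+1,h⟩ = 1),
            Complex.normSq (Kc c s f i ⟨(i:ℕ)+1,h⟩ x) else 0 : ℝ) : ℂ) := by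
  have l1 : ∀ x, star (f x) * (Hn n (psiProd c s)).mulVec f x
      = ∑ i : Fin n, if h : (i:ℕ)+1 < n then
          star (f x) * (psiProd c s (x i, x ⟨(i:ℕ)+1,h⟩) * Kc c s f i ⟨(i:ℕ)+1,h⟩ x) else 0 := by
    intro x
    rw [Hn_mulVec, Finset.mul_sum]
    refine Finset.sum_congr rfl fun i _ => ?_
    by_cases h : (i:ℕ)+1 < n
    · rw [dif_pos h, dif_pos h]
    · rw [dif_neg h, dif_neg h, mul_zero]
  rw [Finset.sum_congr rfl fun x _ => l1 x, Finset.sum_comm]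
  rw [Complex.ofReal_sum]
  refine Finset.sum_congr rfl fun i _ => ?_
  by_cases h : (i:ℕ)+1 < n
  · rw [Finset.sum_congr rfl fun x _ => dif_pos h, dif_pos h,
      sum_conj_mul c s f (fin_succ_ne i h), Complex.ofReal_sum]
  · rw [Finset.sum_congr rfl fun x _ => dif_neg h, dif_neg h]
    simp

lemma mem_ker_iff (c s : ℂ) {n : ℕ} (f : (Fin n → Fin 2) → ℂ) :
    (Hn n (psiProd c s)).mulVec f = 0 ↔
      ∀ (i : Fin n) (h : (i:ℕ)+1 < n) (x : Fin n → Fin 2), Kc c s f i ⟨(i:ℕ)+1,h⟩ x = 0 := by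
  constructor
  · intro hf i h x
    have hq := quad_form c s f
    rw [hf] at hq
    simp only [Pi.zero_apply, mul_zero, Finset.sum_const_zero] at hq
    have hq' : (∑ i : Fin n, if h : (i:ℕ)+1 < n then
        ∑ x ∈ Finset.univ.filter (fun x : Fin n → Fin 2 => x i = 1 ∧ x ⟨(i:ℕ)+1,h⟩ = 1),
          Complex.normSq (Kc c s f i ⟨(i:ℕ)+1,h⟩ x) else 0 : ℝ) = 0 := by
      exact_mod_cast hq.symm
    have hnonneg : ∀ i : Fin n, (0:ℝ) ≤ if h : (i:ℕ)+1 < n then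
        ∑ x ∈ Finset.univ.filter (fun x : Fin n → Fin 2 => x i = 1 ∧ x ⟨(i:ℕ)+1,h⟩ = 1),
          Complex.normSq (Kc c s f i ⟨(i:ℕ)+1,h⟩ x) else 0 := by
      intro i
      by_cases h : (i:ℕ)+1 < n
      · rw [dif_pos h]
        exact Finset.sum_nonneg fun x _ => Complex.normSq_nonneg _
      · rw [dif_neg h]
    have hterm := (Finset.sum_eq_zero_iff_of_nonneg
      (fun i _ => hnonneg i)).mp hq' i (Finset.mem_univ i)
    rw [dif_pos h] at hterm
    have hzero := (Finset.sum_eq_zero_iff_of_nonneg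
      (fun x _ => Complex.normSq_nonneg _)).mp hterm
    set j : Fin n := ⟨(i:ℕ)+1, h⟩ with hj
    have hmem : upd2 x i j 1 1 ∈
        Finset.univ.filter (fun x : Fin n → Fin 2 => x i = 1 ∧ x j = 1) := by
      simp [upd2_apply_i x (j := j) (fin_succ_ne i h), upd2_apply_j]
    have := hzero _ hmem
    have hK0 : Kc c s f i j (upd2 x i j 1 1) = 0 := by
      exact Complex.normSq_eq_zero.mp this
    rwa [Kc_upd2 c s f (fin_succ_ne i h)] at hK0
  · intro hK
    funext x
    rw [Pi.zero_apply, Hn_mulVec]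
    refine Finset.sum_eq_zero fun i _ => ?_
    by_cases h : (i:ℕ)+1 < n
    · rw [dif_pos h, hK i h x, mul_zero]
    · rw [dif_neg h]


def sitef (c s : ℂ) (m : ℕ) (k : ℕ) : Fin 2 → ℂ :=
  if k + 1 < m then ![1, 0] else if k + 1 = m then ![star s, -star c] else ![c, s]

lemma gvec_eq (c s : ℂ) (n : ℕ) (m : ℕ) (x : Fin n → Fin 2) :
    gvec c s n m x = ∏ k : Fin n, sitef c s m (k : ℕ) (x k) := by
  refine Finset.prod_congr rfl fun k _ => ?_
  unfold sitef
  split_ifs <;> rfl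

lemma prod_upd2 {n : ℕ} (F : Fin n → Fin 2 → ℂ) (x : Fin n → Fin 2) {i j : Fin n}
    (hij : i ≠ j) (a b : Fin 2) :
    ∏ k : Fin n, F k (upd2 x i j a b k)
      = F j b * (F i a * ∏ k ∈ (Finset.univ \ {j}) \ {i}, F k (x k)) := by
  have h1 : ∀ k, F k (upd2 x i j a b k)
      = Function.update (fun k => F k (Function.update x i a k)) j (F j b) k := by
    intro k
    by_cases hk : k = j
    · subst hk; simp [upd2]
    · simp [upd2, Function.update_of_ne hk]
  rw [Finset.prod_congr rfl fun k _ => h1 k, Finset.prod_update_of_mem (Finset.mem_univ j)]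
  have h2 : ∀ k, F k (Function.update x i a k)
      = Function.update (fun k => F k (x k)) i (F i a) k := by
    intro k
    by_cases hk : k = i
    · subst hk; simp
    · simp [Function.update_of_ne hk]
  rw [Finset.prod_congr rfl fun k _ => h2 k,
    Finset.prod_update_of_mem (by simp [hij] : i ∈ Finset.univ \ {j})]

lemma sitef_rel (c s : ℂ) (m : ℕ) (p : ℕ) :
    s * sitef c s m p 1 * sitef c s m (p+1) 0 = c * sitef c s m p 1 * sitef c s m (p+1) 1 := by
  unfold sitef
  rcases lt_trichotomy (p+1) m with h1 | h1 | h1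
  · rw [if_pos h1]
    simp
  · rw [if_neg (by omega), if_pos h1, if_neg (by omega), if_neg (by omega)]
    simp only [Matrix.cons_val_one, Matrix.head_cons, Matrix.cons_val_zero]
    ring
  · rw [if_neg (by omega), if_neg (by omega), if_neg (by omega), if_neg (by omega)]
    simp only [Matrix.cons_val_one, Matrix.head_cons, Matrix.cons_val_zero]
    ring

lemma Kc_gvec (c s : ℂ) {n : ℕ} (m : ℕ) (i : Fin n) (h : (i:ℕ)+1 < n) (x : Fin n → Fin 2) :
    Kc c s (gvec c s n m) i ⟨(i:ℕ)+1, h⟩ x = 0 := by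
  set j : Fin n := ⟨(i:ℕ)+1, h⟩ with hj
  have hij : i ≠ j := fin_succ_ne i h
  unfold Kc
  rw [gvec_eq, gvec_eq, prod_upd2 _ _ hij, prod_upd2 _ _ hij]
  have hrel := sitef_rel c s m (i : ℕ)
  have hjv : (j : ℕ) = (i : ℕ) + 1 := rfl
  rw [hjv]
  linear_combination (∏ k ∈ (Finset.univ \ {j}) \ {i}, sitef c s m (k:ℕ) (x k)) * hrel

lemma gvec_mem_ker (c s : ℂ) {n : ℕ} (m : ℕ) :
    (Hn n (psiProd c s)).mulVec (gvec c s n m) = 0 :=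
  (mem_ker_iff c s _).mpr fun i h x => Kc_gvec c s m i h x


lemma sum_prod {n : ℕ} (F : Fin n → Fin 2 → ℂ) :
    (∑ x : Fin n → Fin 2, ∏ k, F k (x k)) = ∏ k, ∑ a, F k a := by
  rw [Finset.prod_univ_sum, Fintype.piFinset_univ]

lemma site_self (c s : ℂ) (hcs : Complex.normSq c + Complex.normSq s = 1) (m p : ℕ) :
    (∑ a : Fin 2, star (sitef c s m p a) * sitef c s m p a) = 1 := by
  have hcs' : c * (starRingEnd ℂ) c + s * (starRingEnd ℂ) s = 1 := by
    rw [Complex.mul_conj, Complex.mul_conj]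
    exact_mod_cast hcs
  unfold sitef
  split_ifs with h1 h2
  · simp [Fin.sum_univ_two]
  · simp only [Fin.sum_univ_two, Matrix.cons_val_zero, Matrix.cons_val_one, Matrix.head_cons,
      Complex.star_def, map_neg, Complex.conj_conj]
    linear_combination hcs'
  · simp only [Fin.sum_univ_two, Matrix.cons_val_zero, Matrix.cons_val_one, Matrix.head_cons,
      Complex.star_def]
    linear_combination hcs'

lemma site_cross_lt (c s : ℂ) {i j p : ℕ} (hlt : i < p + 1) (heq : p + 1 = j) :
    (∑ a : Fin 2, star (sitef c s i p a) * sitef c s j p a) = 0 := by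
  unfold sitef
  rw [if_neg (by omega), if_neg (by omega), if_neg (by omega), if_pos heq]
  simp only [Fin.sum_univ_two, Matrix.cons_val_zero, Matrix.cons_val_one, Matrix.head_cons,
    Complex.star_def, map_neg, Complex.conj_conj]
  ring

lemma site_cross_gt (c s : ℂ) {i j p : ℕ} (heq : p + 1 = i) (hlt : j < p + 1) :
    (∑ a : Fin 2, star (sitef c s i p a) * sitef c s j p a) = 0 := by
  unfold sitef
  rw [if_neg (by omega), if_pos heq, if_neg (by omega), if_neg (by omega)]
  simp only [Fin.sum_univ_two, Matrix.cons_val_zero, Matrix.cons_val_one, Matrix.head_cons,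
    Complex.star_def, map_neg, Complex.conj_conj]
  ring

lemma ortho (c s : ℂ) (hcs : Complex.normSq c + Complex.normSq s = 1) {n : ℕ}
    (i j : ℕ) (hi : i ≤ n) (hj : j ≤ n) :
    (∑ x : Fin n → Fin 2, star (gvec c s n i x) * gvec c s n j x)
      = if i = j then 1 else 0 := by
  have main : (∑ x : Fin n → Fin 2, star (gvec c s n i x) * gvec c s n j x)
      = ∏ k : Fin n, ∑ a : Fin 2, star (sitef c s i (k : ℕ) a) * sitef c s j (k : ℕ) a := by
    rw [← sum_prod]
    refine Finset.sum_congr rfl fun x _ => ?_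
    rw [gvec_eq, gvec_eq, star_prod, ← Finset.prod_mul_distrib]
  rw [main]
  by_cases hij : i = j
  · subst hij
    rw [if_pos rfl]
    exact Finset.prod_eq_one fun k _ => site_self c s hcs i (k : ℕ)
  · rw [if_neg hij]
    rcases Nat.lt_or_ge i j with hlt | hge
    · have hj1 : 1 ≤ j := by omega
      have hjn : j - 1 < n := by omega
      refine Finset.prod_eq_zero (Finset.mem_univ (⟨j - 1, hjn⟩ : Fin n)) ?_
      exact site_cross_lt c s (p := j - 1) (by omega) (by omega)
    · have hlt : j < i := by omega
      have hin : i - 1 < n := by omega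
      refine Finset.prod_eq_zero (Finset.mem_univ (⟨i - 1, hin⟩ : Fin n)) ?_
      exact site_cross_gt c s (p := i - 1) (by omega) (by omega)


def wpt (n k : ℕ) : Fin n → Fin 2 := fun p => if (p : ℕ) < k then 0 else 1

lemma fin2_ne_zero {a : Fin 2} (h : a ≠ 0) : a = 1 := by omega

lemma mono_of_sorted {n : ℕ} {x : Fin n → Fin 2}
    (hs : ∀ (i : Fin n) (h : (i:ℕ)+1 < n), ¬(x i = 1 ∧ x ⟨(i:ℕ)+1, h⟩ = 0)) :
    ∀ (p q : Fin n), (p : ℕ) ≤ (q : ℕ) → x p = 1 → x q = 1 := by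
  have key : ∀ (d : ℕ) (p : Fin n) (h : (p:ℕ) + d < n), x p = 1 → x ⟨(p:ℕ) + d, h⟩ = 1 := by
    intro d
    induction d with
    | zero =>
      intro p h hp
      have : (⟨(p:ℕ) + 0, h⟩ : Fin n) = p := Fin.ext (by simp)
      rwa [this]
    | succ d ih =>
      intro p h hp
      have h' : (p:ℕ) + d < n := by omega
      have hd := ih p h' hp
      have hcontr := hs ⟨(p:ℕ) + d, h'⟩ (by show (p:ℕ) + d + 1 < n; omega)
      rw [not_and] at hcontr
      have := hcontr hd
      have goal_eq : (⟨((⟨(p:ℕ)+d, h'⟩ : Fin n) : ℕ) + 1, by show (p:ℕ) + d + 1 < n; omega⟩ : Fin n)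
          = (⟨(p:ℕ) + (d+1), h⟩ : Fin n) := Fin.ext (by simp; omega)
      rw [goal_eq] at this
      exact fin2_ne_zero this
  intro p q hpq hp
  have hq : q = ⟨(p:ℕ) + ((q:ℕ) - (p:ℕ)), by omega⟩ := Fin.ext (by simp; omega)
  rw [hq]
  exact key _ p _ hp

lemma sorted_eq_wpt {n : ℕ} {x : Fin n → Fin 2}
    (hs : ∀ (i : Fin n) (h : (i:ℕ)+1 < n), ¬(x i = 1 ∧ x ⟨(i:ℕ)+1, h⟩ = 0)) :
    x = wpt n ((Finset.univ.filter (fun k => x k = 0)).card) := by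
  set m := (Finset.univ.filter (fun k => x k = 0)).card with hm
  have claim1 : ∀ p : Fin n, x p = 0 → (p : ℕ) < m := by
    intro p hp
    have hsub : Finset.Iic p ⊆ Finset.univ.filter (fun k => x k = 0) := by
      intro q hq
      rw [Finset.mem_Iic] at hq
      rw [Finset.mem_filter]
      refine ⟨Finset.mem_univ q, ?_⟩
      by_contra hq0
      have hq1 := fin2_ne_zero hq0
      have := mono_of_sorted hs q p hq hq1
      rw [hp] at this
      exact absurd this (by decide)
    have := Finset.card_le_card hsub
    rw [Fin.card_Iic] at this
    omega
  have claim2 : ∀ p : Fin n, x p = 1 → m ≤ (p : ℕ) := by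
    intro p hp
    have hsub : Finset.univ.filter (fun k => x k = 0) ⊆ Finset.Iio p := by
      intro q hq
      rw [Finset.mem_filter] at hq
      rw [Finset.mem_Iio]
      by_contra hq'
      push_neg at hq'
      have := mono_of_sorted hs p q hq' hp
      rw [hq.2] at this
      exact absurd this (by decide)
    have := Finset.card_le_card hsub
    rwa [Fin.card_Iio] at this
  funext p
  have hc : x p = 0 ∨ x p = 1 := by omega
  unfold wpt
  rcases hc with h | h
  · rw [h, if_pos (claim1 p h)]
  · rw [h, if_neg (by have := claim2 p h; omega)]

lemma vanish_of_ker {c s : ℂ} (hs0 : s ≠ 0) {n : ℕ} {f : (Fin n → Fin 2) → ℂ}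
    (hker : ∀ (i : Fin n) (h : (i:ℕ)+1 < n) (x : Fin n → Fin 2), Kc c s f i ⟨(i:ℕ)+1,h⟩ x = 0)
    (hw : ∀ k ≤ n, f (wpt n k) = 0) : f = 0 := by
  have key : ∀ N : ℕ, ∀ x : Fin n → Fin 2,
      (Finset.univ.filter (fun k => x k = 0)).card ≤ N → f x = 0 := by
    intro N
    induction N with
    | zero =>
      intro x hx
      have hsorted : ∀ (i : Fin n) (h : (i:ℕ)+1 < n), ¬(x i = 1 ∧ x ⟨(i:ℕ)+1, h⟩ = 0) := by
        intro i h hcon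
        have hj : (⟨(i:ℕ)+1, h⟩ : Fin n) ∈ Finset.univ.filter (fun k => x k = 0) := by
          rw [Finset.mem_filter]; exact ⟨Finset.mem_univ _, hcon.2⟩
        have := Finset.card_pos.mpr ⟨_, hj⟩
        omega
      rw [sorted_eq_wpt hsorted]
      refine hw _ ?_
      calc (Finset.univ.filter (fun k => x k = 0)).card
          ≤ Finset.univ.card := Finset.card_filter_le _ _
        _ = n := by simp
    | succ N ih =>
      intro x hx
      by_cases hpat : ∃ (i : Fin n) (h : (i:ℕ)+1 < n), x i = 1 ∧ x ⟨(i:ℕ)+1, h⟩ = 0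
      · obtain ⟨i, h, h1, h0⟩ := hpat
        set j : Fin n := ⟨(i:ℕ)+1, h⟩ with hj
        have heq := hker i h x
        unfold Kc at heq
        rw [upd2_eq_self h1 h0] at heq
        have hupd : upd2 x i j 1 1 = Function.update x j 1 := by
          unfold upd2
          rw [← h1, Function.update_eq_self]
        rw [hupd] at heq
        have hcard : (Finset.univ.filter (fun k => Function.update x j 1 k = 0)).card
            = (Finset.univ.filter (fun k => x k = 0)).card - 1 := by
          have hset : Finset.univ.filter (fun k => Function.update x j 1 k = 0)
              = (Finset.univ.filter (fun k => x k = 0)).erase j := by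
            ext k
            rw [Finset.mem_filter, Finset.mem_erase, Finset.mem_filter]
            constructor
            · intro ⟨_, hk⟩
              by_cases hkj : k = j
              · subst hkj; rw [Function.update_self] at hk; exact absurd hk (by decide)
              · rw [Function.update_of_ne hkj] at hk
                exact ⟨hkj, Finset.mem_univ _, hk⟩
            · intro ⟨hkj, _, hk⟩
              rw [Function.update_of_ne hkj]
              exact ⟨Finset.mem_univ _, hk⟩
          rw [hset, Finset.card_erase_of_mem]
          rw [Finset.mem_filter]
          exact ⟨Finset.mem_univ _, h0⟩
        have hjmem : j ∈ Finset.univ.filter (fun k => x k = 0) := by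
          rw [Finset.mem_filter]; exact ⟨Finset.mem_univ _, h0⟩
        have hpos := Finset.card_pos.mpr ⟨_, hjmem⟩
        have hfy := ih (Function.update x j 1) (by omega)
        rw [hfy, mul_zero, sub_zero] at heq
        exact (mul_eq_zero.mp heq).resolve_left hs0
      · push_neg at hpat
        have hsorted : ∀ (i : Fin n) (h : (i:ℕ)+1 < n), ¬(x i = 1 ∧ x ⟨(i:ℕ)+1, h⟩ = 0) := by
          intro i h hcon
          exact absurd hcon.2 (hpat i h hcon.1)
        rw [sorted_eq_wpt hsorted]
        refine hw _ ?_
        calc (Finset.univ.filter (fun k => x k = 0)).card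
            ≤ Finset.univ.card := Finset.card_filter_le _ _
          _ = n := by simp
  funext x
  exact key _ x le_rfl


lemma ker_finrank_le (c s : ℂ) (hs0 : s ≠ 0) (n : ℕ) :
    Module.finrank ℂ (LinearMap.ker (Hn n (psiProd c s)).mulVecLin) ≤ n + 1 := by
  set E : ((Fin n → Fin 2) → ℂ) →ₗ[ℂ] (Fin (n+1) → ℂ) :=
    LinearMap.pi (fun k : Fin (n+1) => LinearMap.proj (wpt n (k : ℕ))) with hE
  have hinj : Function.Injective
      (E.comp (LinearMap.ker (Hn n (psiProd c s)).mulVecLin).subtype) := by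
    rw [← LinearMap.ker_eq_bot, LinearMap.ker_eq_bot']
    rintro ⟨f, hf⟩ hEf
    have hf' : (Hn n (psiProd c s)).mulVec f = 0 := by
      rw [LinearMap.mem_ker] at hf
      rw [← Matrix.mulVecLin_apply]
      exact hf
    have hker := (mem_ker_iff c s f).mp hf'
    have hw : ∀ k ≤ n, f (wpt n k) = 0 := by
      intro k hk
      have := congrFun hEf (⟨k, by omega⟩ : Fin (n+1))
      simpa [hE, LinearMap.pi_apply] using this
    exact Subtype.ext (vanish_of_ker hs0 hker hw)
  have hle := LinearMap.finrank_le_finrank_of_injective hinj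
  rw [Module.finrank_pi ℂ] at hle
  simpa using hle

lemma gvec_indep (c s : ℂ) (hcs : Complex.normSq c + Complex.normSq s = 1) (n : ℕ) :
    LinearIndependent ℂ (fun i : Fin (n+1) => gvec c s n (i : ℕ)) := by
  rw [Fintype.linearIndependent_iff]
  intro g hg i
  have hx : ∀ x : Fin n → Fin 2, (∑ i' : Fin (n+1), g i' * gvec c s n (i' : ℕ) x) = 0 := by
    intro x
    have := congrFun hg x
    simpa [Finset.sum_apply] using this
  have hmain : (∑ i' : Fin (n+1), g i' * (if (i:ℕ) = (i':ℕ) then 1 else 0)) = 0 := by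
    calc ∑ i' : Fin (n+1), g i' * (if (i:ℕ) = (i':ℕ) then (1:ℂ) else 0)
        = ∑ i' : Fin (n+1), ∑ x : Fin n → Fin 2,
            g i' * (star (gvec c s n (i:ℕ) x) * gvec c s n (i':ℕ) x) := by
          refine Finset.sum_congr rfl fun i' _ => ?_
          rw [← Finset.mul_sum, ortho c s hcs _ _ (by omega) (by omega)]
      _ = ∑ x : Fin n → Fin 2,
            star (gvec c s n (i:ℕ) x) * ∑ i' : Fin (n+1), g i' * gvec c s n (i':ℕ) x := by
          rw [Finset.sum_comm]
          refine Finset.sum_congr rfl fun x _ => ?_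
          rw [Finset.mul_sum]
          refine Finset.sum_congr rfl fun i' _ => ?_
          ring
      _ = 0 := by
          refine Finset.sum_eq_zero fun x _ => ?_
          rw [hx x, mul_zero]
  have hswap : ∀ i' : Fin (n+1), g i' * (if (i:ℕ) = (i':ℕ) then (1:ℂ) else 0)
      = if i' = i then g i' else 0 := by
    intro i'
    by_cases h : i' = i
    · subst h; simp
    · rw [if_neg h, if_neg (by simpa [Fin.val_inj] using Ne.symm h), mul_zero]
  rw [Finset.sum_congr rfl fun i' _ => hswap i', Finset.sum_ite_eq' Finset.univ i g] at hmain
  simpa using hmain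

lemma range_eq (c s : ℂ) (n : ℕ) :
    Set.range (fun i : Fin (n+1) => gvec c s n (i : ℕ)) = gvec c s n '' Set.Iic n := by
  ext y
  constructor
  · rintro ⟨i, rfl⟩
    exact ⟨(i : ℕ), by simpa [Set.mem_Iic] using Nat.lt_succ_iff.mp i.isLt, rfl⟩
  · rintro ⟨m, hm, rfl⟩
    exact ⟨⟨m, by simpa [Set.mem_Iic, Nat.lt_succ_iff] using hm⟩, rfl⟩

lemma span_finrank (c s : ℂ) (hcs : Complex.normSq c + Complex.normSq s = 1) (n : ℕ) :
    Module.finrank ℂ (Submodule.span ℂ (gvec c s n '' Set.Iic n)) = n + 1 := by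
  rw [← range_eq, finrank_span_eq_card (gvec_indep c s hcs n)]
  simp

lemma ker_eq_span (c s : ℂ) (hcs : Complex.normSq c + Complex.normSq s = 1) (hs0 : s ≠ 0)
    (n : ℕ) :
    LinearMap.ker (Hn n (psiProd c s)).mulVecLin
      = Submodule.span ℂ (gvec c s n '' Set.Iic n) := by
  have hle : Submodule.span ℂ (gvec c s n '' Set.Iic n)
      ≤ LinearMap.ker (Hn n (psiProd c s)).mulVecLin := by
    rw [Submodule.span_le]
    rintro y ⟨m, hm, rfl⟩
    rw [SetLike.mem_coe, LinearMap.mem_ker, Matrix.mulVecLin_apply]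
    exact gvec_mem_ker c s m
  refine (Submodule.eq_of_le_of_finrank_le hle ?_).symm
  rw [span_finrank c s hcs n]
  exact ker_finrank_le c s hs0 n

lemma gvec0_ne (c s : ℂ) (hs0 : s ≠ 0) (n : ℕ) : gvec c s n 0 ≠ 0 := by
  intro h0
  have := congrFun h0 (fun _ => 1)
  rw [Pi.zero_apply] at this
  unfold gvec at this
  simp only [Nat.not_lt_zero, if_false, Nat.succ_ne_zero, Matrix.cons_val_one,
    Matrix.head_cons] at this
  rw [Finset.prod_const, Finset.card_univ, Fintype.card_fin] at this
  exact pow_ne_zero n hs0 this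

lemma zero_in_spec (c s : ℂ) (hs0 : s ≠ 0) (n : ℕ) :
    (0 : ℂ) ∈ spectrum ℂ (Hn n (psiProd c s)) := by
  rw [spectrum.zero_mem_iff]
  intro hu
  rw [Matrix.isUnit_iff_isUnit_det, isUnit_iff_ne_zero] at hu
  exact hu (Matrix.exists_mulVec_eq_zero_iff.mp
    ⟨gvec c s n 0, gvec0_ne c s hs0 n, gvec_mem_ker c s 0⟩)

lemma spec_nonneg (c s : ℂ) (n : ℕ) (z : ℂ) (hz : z ∈ spectrum ℂ (Hn n (psiProd c s))) :
    0 ≤ z.re ∧ z.im = 0 := by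
  rw [spectrum.mem_iff, Matrix.isUnit_iff_isUnit_det, isUnit_iff_ne_zero, not_not] at hz
  obtain ⟨v, hv0, hv⟩ := Matrix.exists_mulVec_eq_zero_iff.mpr hz
  have hvz : (Hn n (psiProd c s)).mulVec v = z • v := by
    have := hv
    rw [Matrix.sub_mulVec] at this
    have halg : (algebraMap ℂ (Matrix (Fin n → Fin 2) (Fin n → Fin 2) ℂ) z).mulVec v
        = z • v := by
      rw [Algebra.algebraMap_eq_smul_one, Matrix.smul_mulVec, Matrix.one_mulVec]
    rw [halg] at this
    exact (sub_eq_zero.mp this).symm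
  have hpoint : ∀ x : Fin n → Fin 2, star (v x) * ((Hn n (psiProd c s)).mulVec v) x
      = z * ((Complex.normSq (v x) : ℝ) : ℂ) := by
    intro x
    rw [hvz, Pi.smul_apply, smul_eq_mul,
      show star (v x) * (z * v x) = z * (v x * star (v x)) from by ring,
      Complex.star_def, Complex.mul_conj]
  have hq := quad_form c s v
  rw [Finset.sum_congr rfl fun x _ => hpoint x, ← Finset.mul_sum, ← Complex.ofReal_sum] at hq
  set T : ℝ := ∑ x : Fin n → Fin 2, Complex.normSq (v x) with hT
  set R : ℝ := ∑ i : Fin n, if h : (i:ℕ)+1 < n then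
      ∑ x ∈ Finset.univ.filter (fun x : Fin n → Fin 2 => x i = 1 ∧ x ⟨(i:ℕ)+1,h⟩ = 1),
        Complex.normSq (Kc c s v i ⟨(i:ℕ)+1,h⟩ x) else 0 with hR
  have hR0 : 0 ≤ R := by
    rw [hR]
    refine Finset.sum_nonneg fun i _ => ?_
    by_cases h : (i:ℕ)+1 < n
    · rw [dif_pos h]
      exact Finset.sum_nonneg fun x _ => Complex.normSq_nonneg _
    · rw [dif_neg h]
  have hTpos : 0 < T := by
    obtain ⟨x, hx⟩ := Function.ne_iff.mp hv0
    refine Finset.sum_pos' (fun y _ => Complex.normSq_nonneg _) ⟨x, Finset.mem_univ x, ?_⟩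
    exact Complex.normSq_pos.mpr hx
  have hTne : ((T : ℝ) : ℂ) ≠ 0 := by
    exact_mod_cast ne_of_gt hTpos
  have hzeq : z = ((R / T : ℝ) : ℂ) := by
    rw [Complex.ofReal_div, eq_div_iff hTne]
    linear_combination hq
  constructor
  · rw [hzeq, Complex.ofReal_re]
    exact div_nonneg hR0 hTpos.le
  · rw [hzeq, Complex.ofReal_im]

end GSPC

theorem ground_space_product_case (c s : ℂ)
    (hcs : Complex.normSq c + Complex.normSq s = 1) (hs : s ≠ 0)
    (n : ℕ) (hn : 2 ≤ n) :
    (∀ i ≤ n, gvec c s n i ∈ LinearMap.ker (Hn n (psiProd c s)).mulVecLin) ∧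
    (∀ i ≤ n, ∀ j ≤ n,
      (∑ x : Fin n → Fin 2, star (gvec c s n i x) * gvec c s n j x) =
        if i = j then 1 else 0) ∧
    LinearMap.ker (Hn n (psiProd c s)).mulVecLin =
      Submodule.span ℂ (gvec c s n '' Set.Iic n) ∧
    Module.finrank ℂ (LinearMap.ker (Hn n (psiProd c s)).mulVecLin) = n + 1 ∧
    (0 : ℂ) ∈ spectrum ℂ (Hn n (psiProd c s)) ∧
    (∀ z ∈ spectrum ℂ (Hn n (psiProd c s)), 0 ≤ z.re ∧ z.im = 0) := by
  refine ⟨?_, ?_, ?_, ?_, ?_, ?_⟩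
  · intro i hi
    rw [LinearMap.mem_ker, Matrix.mulVecLin_apply]
    exact GSPC.gvec_mem_ker c s i
  · intro i hi j hj
    exact GSPC.ortho c s hcs i j hi hj
  · exact GSPC.ker_eq_span c s hcs hs n
  · rw [GSPC.ker_eq_span c s hcs hs n]
    exact GSPC.span_finrank c s hcs n
  · exact GSPC.zero_in_spec c s hs n
  · exact fun z hz => GSPC.spec_nonneg c s n z hz
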